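/- For the Shapley weights q_k = k!(n−k−1)!/n! (0 ≤ k ≤ n−1), with β_k = k·q_{k-1} − (n−k)·q_k and q_{-1} = q_n = 0, the polynomial P_ℓ(z) = ∑_{k=0}^{ℓ} C(ℓ,k) β_k (1+z)^k z^{ℓ−k} equals −z^ℓ for every 0 ≤ ℓ ≤ n−1. -/

import Mathlib

open Finset Polynomial

/-- The polynomial `P_ℓ(z) = ∑_{k=0}^{ℓ} C(ℓ,k) β_k (1+z)^k z^{ℓ−k}` where
`β_k = k·q_{k-1} − (n−k)·q_k`. -/
noncomputable def indexPoly (n : ℕ) (q : ℤ → ℝ) (ℓ : ℕ) : Polynomial ℝ :=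
  ∑ k ∈ Finset.range (ℓ + 1),
    Polynomial.C ((ℓ.choose k : ℝ) *
        ((k : ℝ) * q ((k : ℤ) - 1) - ((n : ℝ) - (k : ℝ)) * q k)) *
      (1 + Polynomial.X) ^ k * Polynomial.X ^ (ℓ - k)

/-- For the Shapley weights `q_k = k!(n−k−1)!/n!` the polynomial `P_ℓ` equals `−z^ℓ`. -/
theorem indexPoly_shapley {n : ℕ} (hn : 1 ≤ n) (q : ℤ → ℝ)
    (hq : ∀ k : ℕ, k < n →
      q k = (k.factorial : ℝ) * ((n - k - 1).factorial : ℝ) / (n.factorial : ℝ))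
    (hqm : q (-1) = 0) (hqn : q n = 0) :
    ∀ ℓ < n, indexPoly n q ℓ = -(Polynomial.X ^ ℓ) := by
  intro ℓ hℓ
  have hfacn : (n.factorial : ℝ) ≠ 0 := by
    exact_mod_cast Nat.factorial_pos n |>.ne'
  unfold indexPoly
  rw [Finset.sum_eq_single 0]
  · have h0 := hq 0 (lt_of_lt_of_le Nat.zero_lt_one hn)
    simp only [Nat.cast_zero, Nat.choose_zero_right, Nat.cast_one, pow_zero, mul_one,
      Nat.sub_zero] at h0 ⊢
    rw [show ((0:ℤ) - 1) = -1 by ring, hqm, h0]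
    have hmul : (n : ℝ) * ((n - 1).factorial : ℝ) = (n.factorial : ℝ) := by
      exact_mod_cast congrArg (Nat.cast : ℕ → ℝ) (Nat.mul_factorial_pred (Nat.one_le_iff_ne_zero.mp hn))
    have : (1 : ℝ) * ((0:ℝ) * 0 - ((n:ℝ) - 0) *
        ((Nat.factorial 0 : ℝ) * ((n - 1).factorial : ℝ) / (n.factorial : ℝ))) = -1 := by
      rw [Nat.factorial_zero]
      field_simp
      push_cast
      linarith [hmul]
    rw [this]
    simp
  · intro k hk hk0
    have hkℓ : k ≤ ℓ := Nat.lt_succ_iff.mp (Finset.mem_range.mp hk)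
    have hk1 : 1 ≤ k := Nat.one_le_iff_ne_zero.mpr hk0
    have hkn : k < n := lt_of_le_of_lt hkℓ hℓ
    have hk1n : k - 1 < n := lt_of_le_of_lt (Nat.sub_le k 1) hkn
    have hq1 := hq (k - 1) hk1n
    have hq2 := hq k hkn
    have hcast : ((k : ℤ) - 1) = ((k - 1 : ℕ) : ℤ) := by
      omega
    have key : (k : ℝ) * q ((k : ℤ) - 1) - ((n : ℝ) - (k : ℝ)) * q k = 0 := by
      rw [hcast, hq1, hq2]
      have e1 : (k : ℝ) * ((k - 1).factorial : ℝ) = (k.factorial : ℝ) := by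
        exact_mod_cast congrArg (Nat.cast : ℕ → ℝ) (Nat.mul_factorial_pred (Nat.one_le_iff_ne_zero.mp hk1))
      have e2 : n - (k - 1) - 1 = n - k := by omega
      have e3 : ((n : ℝ) - (k : ℝ)) * ((n - k - 1).factorial : ℝ) = ((n - k).factorial : ℝ) := by
        have h1 : 1 ≤ n - k := by omega
        have := Nat.mul_factorial_pred (Nat.one_le_iff_ne_zero.mp h1)
        have hc : ((n - k : ℕ) : ℝ) = (n : ℝ) - (k : ℝ) := by
          push_cast [Nat.cast_sub hkn.le]; ring
        calc ((n : ℝ) - (k : ℝ)) * ((n - k - 1).factorial : ℝ)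
            = ((n - k : ℕ) : ℝ) * (((n - k) - 1).factorial : ℝ) := by rw [hc]
          _ = ((n - k).factorial : ℝ) := by exact_mod_cast congrArg (Nat.cast : ℕ → ℝ) this
      rw [e2]
      field_simp
      linear_combination (((n - k).factorial : ℝ)) * e1 - ((k.factorial : ℝ)) * e3
    rw [key]
    simp
  · intro h
    exact absurd (Finset.mem_range.mpr (Nat.succ_pos ℓ)) h
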